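/- The Q-symmetrization projection satisfies the inductive formula P_{n+1} = (1/(n+1)) (1 + Ψ_1 + Ψ_2Ψ_1 + ... + Ψ_n Ψ_{n-1} ··· Ψ_1)(1 ⊗ P_n). -/

import Mathlib

/-- `Q_π(t_1,…,t_n) = ∏_{i<j, π(i)>π(j)} Q(t_i,t_j)`. -/
def Qpi {T : Type*} (Q : T → T → ℂ) {n : ℕ} (π : Equiv.Perm (Fin n)) (t : Fin n → T) : ℂ :=
  ∏ p ∈ Finset.univ.filter (fun p : Fin n × Fin n => p.1 < p.2 ∧ π p.2 < π p.1),
    Q (t p.1) (t p.2)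

/-- The `Q`-symmetrization `P_n f = (1/n!) Σ_π Q_π(t) f(t∘π⁻¹)`. -/
noncomputable def Psym {T : Type*} (Q : T → T → ℂ) {n : ℕ} (f : (Fin n → T) → ℂ) :
    (Fin n → T) → ℂ :=
  fun t => ((n.factorial : ℂ))⁻¹ * ∑ π : Equiv.Perm (Fin n), Qpi Q π t * f (t ∘ ⇑π⁻¹)

/-- The operator `Ψ_{j+1}` (1-based), i.e. swapping `0`-based positions `j` and `j+1`
of a function of `n+1` variables, for `j : Fin n`. -/
def PsiF {T : Type*} (Q : T → T → ℂ) {n : ℕ} (j : Fin n)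
    (f : (Fin (n + 1) → T) → ℂ) : (Fin (n + 1) → T) → ℂ :=
  fun t => Q (t j.castSucc) (t j.succ) * f (t ∘ Equiv.swap j.castSucc j.succ)

/-- `1 ⊗ P_n`: identity in the first variable, `Q`-symmetrization in the last `n`. -/
noncomputable def oneTensorPsym {T : Type*} (Q : T → T → ℂ) {n : ℕ}
    (f : (Fin (n + 1) → T) → ℂ) : (Fin (n + 1) → T) → ℂ :=
  fun t => ((n.factorial : ℂ))⁻¹ * ∑ π : Equiv.Perm (Fin n),
    Qpi Q π (t ∘ Fin.succ) * f (Fin.cons (t 0) ((t ∘ Fin.succ) ∘ ⇑π⁻¹))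

/-- `chainPsi g k = Ψ_k Ψ_{k-1} ⋯ Ψ_1 g` (1-based; identity for `k = 0`). -/
noncomputable def chainPsi {T : Type*} (Q : T → T → ℂ) {n : ℕ}
    (g : (Fin (n + 1) → T) → ℂ) : ℕ → ((Fin (n + 1) → T) → ℂ)
  | 0 => g
  | (k + 1) => if h : k < n then PsiF Q ⟨k, h⟩ (chainPsi Q g k) else chainPsi Q g k


open Finset Equiv

section Aux
variable {T : Type*} (Q : T → T → ℂ) {n : ℕ}

/-- The cycle `0 → k → k-1 → ⋯ → 1 → 0`. -/
def rho (k : Fin (n + 1)) : Equiv.Perm (Fin (n + 1)) := (Fin.cycleRange k)⁻¹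

lemma rho_zero (k : Fin (n + 1)) : rho k 0 = k := by
  rw [rho, Perm.inv_eq_iff_eq, Fin.cycleRange_self]

lemma rho_succ (k : Fin (n + 1)) (a : Fin n) : rho k a.succ = k.succAbove a := by
  rw [rho, Perm.inv_eq_iff_eq, Fin.cycleRange_succAbove]

/-- The permutation with `0 ↦ k`, `a.succ ↦ k.succAbove (σ a)`. -/
def decomp (k : Fin (n + 1)) (σ : Equiv.Perm (Fin n)) : Equiv.Perm (Fin (n + 1)) :=
  rho k * Equiv.Perm.decomposeFin.symm (0, σ)

lemma decomp_zero (k : Fin (n + 1)) (σ : Equiv.Perm (Fin n)) : decomp k σ 0 = k := by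
  simp [decomp, Perm.mul_apply, Equiv.Perm.decomposeFin_symm_apply_zero, rho_zero]

lemma decomp_succ (k : Fin (n + 1)) (σ : Equiv.Perm (Fin n)) (a : Fin n) :
    decomp k σ a.succ = k.succAbove (σ a) := by
  simp [decomp, Perm.mul_apply, Equiv.Perm.decomposeFin_symm_apply_succ, Equiv.swap_self,
    rho_succ]

/-- The reindexing bijection. -/
noncomputable def decompEquiv (n : ℕ) : Fin (n + 1) × Equiv.Perm (Fin n) ≃ Equiv.Perm (Fin (n + 1)) where
  toFun p := (decomp p.1 p.2)⁻¹
  invFun π := (π⁻¹ 0, (Equiv.Perm.decomposeFin ((rho (π⁻¹ 0))⁻¹ * π⁻¹)).2)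
  left_inv := by
    rintro ⟨k, σ⟩
    simp only [inv_inv, decomp_zero, Prod.mk.injEq]
    refine ⟨trivial, ?_⟩
    have h : (rho k)⁻¹ * decomp k σ = Equiv.Perm.decomposeFin.symm (0, σ) := by
      rw [decomp]; group
    rw [h, Equiv.apply_symm_apply]
  right_inv := by
    intro π
    simp only
    set β : Equiv.Perm (Fin (n + 1)) := (rho (π⁻¹ 0))⁻¹ * π⁻¹ with hβ
    have hb0 : β 0 = 0 := by
      rw [hβ, Perm.mul_apply, show (rho (π⁻¹ 0))⁻¹ = (rho (π⁻¹ 0)).symm from rfl,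
        Equiv.symm_apply_eq]
      exact (rho_zero _).symm
    have h1 : (Equiv.Perm.decomposeFin β).1 = 0 := by
      have h := Equiv.Perm.decomposeFin_symm_apply_zero (Equiv.Perm.decomposeFin β).1
        (Equiv.Perm.decomposeFin β).2
      rw [Prod.mk.eta, Equiv.symm_apply_apply] at h
      rw [← hb0, h]
    have h2 : Equiv.Perm.decomposeFin.symm (0, (Equiv.Perm.decomposeFin β).2) = β := by
      conv_lhs => rw [← h1, Prod.mk.eta, Equiv.symm_apply_apply]
    have h3 : decomp (π⁻¹ 0) (Equiv.Perm.decomposeFin β).2 = π⁻¹ := by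
      rw [decomp, h2, hβ, mul_inv_cancel_left]
    rw [h3, inv_inv]

end Aux

section Main
variable {T : Type*} (Q : T → T → ℂ) {n : ℕ}

lemma Qpi_decomp (k : Fin (n + 1)) (σ : Equiv.Perm (Fin n)) (t : Fin (n + 1) → T) :
    Qpi Q (decomp k σ)⁻¹ t =
      (∏ i ∈ Finset.univ.filter (fun i : Fin (n + 1) => i < k), Q (t i) (t k)) *
        Qpi Q σ⁻¹ ((t ∘ ⇑(rho k)) ∘ Fin.succ) := by
  set π := (decomp k σ)⁻¹ with hπdef
  have hπk : π k = 0 := by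
    rw [hπdef, show ⇑(decomp k σ)⁻¹ = ⇑(decomp k σ).symm from rfl, Equiv.symm_apply_eq]
    exact (decomp_zero k σ).symm
  have hπs : ∀ b : Fin n, π (k.succAbove b) = (σ⁻¹ b).succ := by
    intro b
    rw [hπdef, show ⇑(decomp k σ)⁻¹ = ⇑(decomp k σ).symm from rfl, Equiv.symm_apply_eq,
      decomp_succ, ← Equiv.Perm.mul_apply, mul_inv_cancel, Equiv.Perm.one_apply]
  have hsplit : Finset.univ.filter
      (fun p : Fin (n + 1) × Fin (n + 1) => p.1 < p.2 ∧ π p.2 < π p.1) =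
      ((Finset.univ.filter (fun i : Fin (n + 1) => i < k)).image (fun i => (i, k))) ∪
      ((Finset.univ.filter
          (fun q : Fin n × Fin n => q.1 < q.2 ∧ σ⁻¹ q.2 < σ⁻¹ q.1)).image
        (fun q => (k.succAbove q.1, k.succAbove q.2))) := by
    ext ⟨i, j⟩
    simp only [Finset.mem_filter, Finset.mem_univ, true_and, Finset.mem_union,
      Finset.mem_image, Prod.mk.injEq, Prod.exists]
    constructor
    · rintro ⟨hij, hlt⟩
      have hi : i ≠ k := by
        rintro rfl
        rw [hπk] at hlt
        exact (Fin.not_lt_zero _) hlt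
      by_cases hj : j = k
      · subst hj
        exact Or.inl ⟨i, hij, rfl, rfl⟩
      · obtain ⟨a, ha⟩ := Fin.exists_succAbove_eq hi
        obtain ⟨b, hb⟩ := Fin.exists_succAbove_eq hj
        refine Or.inr ⟨a, b, ⟨?_, ?_⟩, ha, hb⟩
        · rw [← ha, ← hb] at hij
          exact Fin.succAbove_lt_succAbove_iff.mp hij
        · rw [← ha, ← hb, hπs, hπs] at hlt
          exact Fin.succ_lt_succ_iff.mp hlt
    · rintro (⟨i', hi', rfl, rfl⟩ | ⟨a, b, ⟨hab, hba⟩, rfl, rfl⟩)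
      · refine ⟨hi', ?_⟩
        obtain ⟨a, ha⟩ := Fin.exists_succAbove_eq (ne_of_lt hi')
        rw [hπk, ← ha, hπs]
        exact Fin.succ_pos _
      · refine ⟨Fin.succAbove_lt_succAbove_iff.mpr hab, ?_⟩
        rw [hπs, hπs]
        exact Fin.succ_lt_succ_iff.mpr hba
  have hdisj : Disjoint
      ((Finset.univ.filter (fun i : Fin (n + 1) => i < k)).image (fun i => (i, k)))
      ((Finset.univ.filter
          (fun q : Fin n × Fin n => q.1 < q.2 ∧ σ⁻¹ q.2 < σ⁻¹ q.1)).image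
        (fun q => (k.succAbove q.1, k.succAbove q.2))) := by
    rw [Finset.disjoint_left]
    rintro ⟨i, j⟩ h1 h2
    simp only [Finset.mem_image, Prod.mk.injEq, Prod.exists] at h1 h2
    obtain ⟨i', _, _, hj1⟩ := h1
    obtain ⟨a, b, _, _, hj2⟩ := h2
    rw [← hj1] at hj2
    exact Fin.succAbove_ne k b hj2
  rw [Qpi, hsplit, Finset.prod_union hdisj, Finset.prod_image, Finset.prod_image]
  · congr 1
    rw [Qpi]
    refine Finset.prod_congr rfl fun q _ => ?_
    simp only [Function.comp_apply, rho_succ]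
  · intro x _ y _ h
    have h1 : k.succAbove x.1 = k.succAbove y.1 := congrArg Prod.fst h
    have h2 : k.succAbove x.2 = k.succAbove y.2 := congrArg Prod.snd h
    exact Prod.ext (Fin.succAbove_right_injective h1) (Fin.succAbove_right_injective h2)
  · intro x _ y _ h
    exact congrArg Prod.fst h

lemma chain_eq (g : (Fin (n + 1) → T) → ℂ) :
    ∀ (k : ℕ) (hk : k ≤ n) (t : Fin (n + 1) → T),
      chainPsi Q g k t =
        (∏ i ∈ Finset.univ.filter (fun i : Fin (n + 1) => i < ⟨k, Nat.lt_succ_of_le hk⟩),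
            Q (t i) (t ⟨k, Nat.lt_succ_of_le hk⟩)) *
          g (t ∘ ⇑(rho (⟨k, Nat.lt_succ_of_le hk⟩ : Fin (n + 1)))) := by
  intro k
  induction k with
  | zero =>
    intro hk t
    have h1 : rho (⟨0, Nat.lt_succ_of_le hk⟩ : Fin (n + 1)) = 1 := by
      rw [rho, Fin.cycleRange_mk_zero (Nat.zero_lt_succ n), inv_one]
    have h2 : Finset.univ.filter
        (fun i : Fin (n + 1) => i < (⟨0, Nat.lt_succ_of_le hk⟩ : Fin (n + 1))) = ∅ := by
      ext i; simp [Fin.lt_def]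
    rw [chainPsi, h1, h2]
    simp
  | succ k ih =>
    intro hk t
    have h : k < n := hk
    have hk1 : k + 1 < n + 1 := Nat.succ_lt_succ h
    have hkn1 : k < n + 1 := Nat.lt_succ_of_lt h
    set c : Fin (n + 1) := (⟨k, h⟩ : Fin n).castSucc with hc
    set s : Fin (n + 1) := (⟨k, h⟩ : Fin n).succ with hs
    have hcv : (c : ℕ) = k := rfl
    have hsv : (s : ℕ) = k + 1 := rfl
    rw [chainPsi, dif_pos h, PsiF]
    rw [ih (le_of_lt h) (t ∘ ⇑(Equiv.swap c s))]
    have hfix : ∀ i : Fin (n + 1), (i : ℕ) < k → Equiv.swap c s i = i := by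
      intro i hi
      refine Equiv.swap_apply_of_ne_of_ne ?_ ?_ <;>
        · intro hcontra; rw [Fin.ext_iff] at hcontra; omega
    have hck : c = (⟨k, hkn1⟩ : Fin (n + 1)) := rfl
    have hprod : (∏ i ∈ Finset.univ.filter
          (fun i : Fin (n + 1) => i < (⟨k, hkn1⟩ : Fin (n + 1))),
          Q ((t ∘ ⇑(Equiv.swap c s)) i) ((t ∘ ⇑(Equiv.swap c s)) ⟨k, hkn1⟩)) =
        ∏ i ∈ Finset.univ.filter
          (fun i : Fin (n + 1) => i < (⟨k, hkn1⟩ : Fin (n + 1))),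
          Q (t i) (t ⟨k + 1, hk1⟩) := by
      refine Finset.prod_congr rfl fun i hi => ?_
      rw [Finset.mem_filter] at hi
      have hiv : (i : ℕ) < k := hi.2
      have h2 : Equiv.swap c s (⟨k, hkn1⟩ : Fin (n + 1)) = s := by
        rw [← hck, Equiv.swap_apply_left]
      rw [Function.comp_apply, Function.comp_apply, hfix i hiv, h2]
      rfl
    have hins : Finset.univ.filter
        (fun i : Fin (n + 1) => i < (⟨k + 1, hk1⟩ : Fin (n + 1))) =
        insert (⟨k, hkn1⟩ : Fin (n + 1)) (Finset.univ.filter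
          (fun i : Fin (n + 1) => i < (⟨k, hkn1⟩ : Fin (n + 1)))) := by
      ext i
      simp only [Finset.mem_filter, Finset.mem_univ, true_and, Finset.mem_insert, Fin.lt_def,
        Fin.ext_iff]
      omega
    have hnmem : (⟨k, hkn1⟩ : Fin (n + 1)) ∉ Finset.univ.filter
        (fun i : Fin (n + 1) => i < (⟨k, hkn1⟩ : Fin (n + 1))) := by
      simp [Fin.lt_def]
    have hcomp : (t ∘ ⇑(Equiv.swap c s)) ∘ ⇑(rho (⟨k, hkn1⟩ : Fin (n + 1))) =
        t ∘ ⇑(rho (⟨k + 1, hk1⟩ : Fin (n + 1))) := by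
      funext x
      induction x using Fin.cases with
      | zero =>
        simp only [Function.comp_apply, rho_zero]
        rw [← hck, Equiv.swap_apply_left]
        rfl
      | succ a =>
        simp only [Function.comp_apply, rho_succ]
        congr 1
        simp only [Fin.succAbove, Equiv.swap_apply_def, hc, hs, Fin.ext_iff, Fin.lt_def,
          Fin.coe_castSucc, Fin.val_succ]
        split_ifs <;> simp_all <;> omega
    rw [hprod, hins, Finset.prod_insert hnmem, hcomp]
    have htc : t c = t ⟨k, hkn1⟩ := rfl
    have hts : t s = t ⟨k + 1, hk1⟩ := rfl
    rw [htc, hts]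
    ring

end Main

/-- the inductive formula
`P_{n+1} = (1/(n+1)) (1 + Ψ_1 + Ψ_2Ψ_1 + ⋯ + Ψ_n⋯Ψ_1)(1 ⊗ P_n)`. -/
theorem Psym_succ_formula {T : Type*} (Q : T → T → ℂ)
    (hherm : ∀ s t, (starRingEnd ℂ) (Q t s) = Q s t)
    (habs : ∀ s t, ‖Q s t‖ = 1)
    (n : ℕ) (f : (Fin (n + 1) → T) → ℂ) :
    Psym Q f = fun t => ((n + 1 : ℂ))⁻¹ *
      ∑ k ∈ Finset.range (n + 1), chainPsi Q (oneTensorPsym Q f) k t := by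
  funext t
  -- Right-hand side rewriting
  have hR : ∀ k : Fin (n + 1), chainPsi Q (oneTensorPsym Q f) (k : ℕ) t =
      (∏ i ∈ Finset.univ.filter (fun i : Fin (n + 1) => i < k), Q (t i) (t k)) *
        ((n.factorial : ℂ))⁻¹ * ∑ σ : Equiv.Perm (Fin n),
          Qpi Q σ⁻¹ ((t ∘ ⇑(rho k)) ∘ Fin.succ) *
            f (Fin.cons ((t ∘ ⇑(rho k)) 0) (((t ∘ ⇑(rho k)) ∘ Fin.succ) ∘ ⇑σ)) := by
    intro k
    rw [chain_eq Q (oneTensorPsym Q f) (k : ℕ) (Nat.lt_succ_iff.mp k.isLt) t]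
    simp only [Fin.eta]
    rw [oneTensorPsym, mul_assoc]
    congr 1
    congr 1
    exact Fintype.sum_equiv (Equiv.inv (Equiv.Perm (Fin n))) _ _ (fun σ => by
      simp only [Equiv.inv_apply, inv_inv])
  -- Left-hand side rewriting
  rw [Psym]
  rw [show (∑ π : Equiv.Perm (Fin (n + 1)), Qpi Q π t * f (t ∘ ⇑π⁻¹)) =
      ∑ p : Fin (n + 1) × Equiv.Perm (Fin n),
        Qpi Q (decomp p.1 p.2)⁻¹ t * f (t ∘ ⇑(decomp p.1 p.2)) from
    (Fintype.sum_equiv (decompEquiv n) _ _ (fun p => by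
      simp only [decompEquiv, Equiv.coe_fn_mk, inv_inv])).symm]
  rw [Fintype.sum_prod_type]
  have harg : ∀ (k : Fin (n + 1)) (σ : Equiv.Perm (Fin n)),
      t ∘ ⇑(decomp k σ) =
        Fin.cons ((t ∘ ⇑(rho k)) 0) (((t ∘ ⇑(rho k)) ∘ Fin.succ) ∘ ⇑σ) := by
    intro k σ
    funext x
    induction x using Fin.cases with
    | zero => simp [decomp_zero, rho_zero]
    | succ a => simp [decomp_succ, rho_succ]
  simp only [Qpi_decomp, harg]
  rw [show ∑ k ∈ Finset.range (n + 1), chainPsi Q (oneTensorPsym Q f) k t =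
      ∑ k : Fin (n + 1), chainPsi Q (oneTensorPsym Q f) (k : ℕ) t from
    (Fin.sum_univ_eq_sum_range _ _).symm]
  simp only [hR]
  simp only [Finset.mul_sum]
  refine Finset.sum_congr rfl fun k _ => ?_
  refine Finset.sum_congr rfl fun σ _ => ?_
  have hfac : ((n + 1).factorial : ℂ) = ((n : ℂ) + 1) * (n.factorial : ℂ) := by
    rw [Nat.factorial_succ]; push_cast; ring
  rw [hfac, mul_inv]
  ring
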